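/- Let H be a group of permutations of a finite set Ω and let α ∈ Ω. Suppose H has a regular normal subgroup P which is elementary abelian of order p^k, where p is a prime and k ≥ 2. Suppose further that p^k − 1 has a primitive prime divisor r and that r divides |H_α|. Then H acts primitively on Ω. -/

import Mathlib

def stabOf {Ω : Type*} (G : Subgroup (Equiv.Perm Ω)) (α : Ω) : Subgroup (Equiv.Perm Ω) :=
  G ⊓ MulAction.stabilizer (Equiv.Perm Ω) α

def TransOn {Ω : Type*} (H : Subgroup (Equiv.Perm Ω)) (S : Set Ω) : Prop :=
  ∀ x ∈ S, ∀ y ∈ S, ∃ g ∈ H, g x = y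

def IsBlockOn {Ω : Type*} (H : Subgroup (Equiv.Perm Ω)) (S B : Set Ω) : Prop :=
  B ⊆ S ∧ ∀ g ∈ H, (⇑g '' B) = B ∨ Disjoint (⇑g '' B) B

def PrimOn {Ω : Type*} (H : Subgroup (Equiv.Perm Ω)) (S : Set Ω) : Prop :=
  TransOn H S ∧ ∀ B : Set Ω, IsBlockOn H S B → B.Subsingleton ∨ B = S

def NormalIn {W : Type*} [Group W] (N H : Subgroup W) : Prop :=
  N ≤ H ∧ ∀ h ∈ H, ∀ x ∈ N, h * x * h⁻¹ ∈ N

open Equiv MulAction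

lemma fix_modEq {Ω : Type*} [Finite Ω] (g : Equiv.Perm Ω) {r : ℕ} (hr : r.Prime)
    (hg : orderOf g = r) (S : Set Ω) (hS : ∀ x, x ∈ S ↔ g x ∈ S) :
    Nat.card S ≡ Nat.card {x : Ω // x ∈ S ∧ g x = x} [MOD r] := by
  classical
  haveI := Fact.mk hr
  set f : Equiv.Perm S := g.subtypePerm (fun x => (hS x).symm) with hf
  have hgr : g ^ r = 1 := by rw [← hg]; exact pow_orderOf_eq_one g
  have hfr : f ^ r = 1 := by
    ext x
    rw [hf, Equiv.Perm.subtypePerm_pow]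
    simp [hgr]
  have hdvd : orderOf f ∣ r := orderOf_dvd_of_pow_eq_one hfr
  have hpg : IsPGroup r (Subgroup.zpowers f) := by
    rcases (Nat.dvd_prime hr).mp hdvd with h1 | h1
    · exact IsPGroup.of_card (n := 0) (by rw [Nat.card_zpowers, h1, pow_zero])
    · exact IsPGroup.of_card (n := 1) (by rw [Nat.card_zpowers, h1, pow_one])
  have hmod := hpg.card_modEq_card_fixedPoints S
  have hfix : ∀ y : S, f y = y → ∀ h : Subgroup.zpowers f, h • y = y := by
    rintro y hy ⟨h, n, rfl⟩
    show (f ^ n) • y = y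
    exact Function.IsFixedPt.perm_zpow hy n
  have hfixeq : Nat.card (fixedPoints (Subgroup.zpowers f) S) =
      Nat.card {x : Ω // x ∈ S ∧ g x = x} := by
    apply Nat.card_congr
    refine Equiv.ofBijective
      (fun y => ⟨(y.1 : Ω), (y.1 : S).2, by
        have h1 : f y.1 = y.1 := y.2 ⟨f, Subgroup.mem_zpowers f⟩
        have := Subtype.ext_iff.mp h1
        simpa [hf] using this⟩) ⟨?_, ?_⟩
    · rintro ⟨⟨y, hy⟩, h2⟩ ⟨⟨z, hz⟩, h3⟩ hyz
      simp only [Subtype.mk.injEq] at hyz ⊢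
      exact hyz
    · rintro ⟨x, hx, hgx⟩
      refine ⟨⟨⟨x, hx⟩, hfix ⟨x, hx⟩ (Subtype.ext hgx)⟩, rfl⟩
  rwa [hfixeq] at hmod

lemma card_eval_eq {Ω : Type*} (P Q : Subgroup (Equiv.Perm Ω)) (α : Ω)
    (hfree : ∀ x ∈ P, ∀ y ∈ P, x α = y α → x = y)
    (hQP : Q ≤ P) (B : Set Ω)
    (hmem : ∀ x ∈ Q, x α ∈ B) (hsurj : ∀ b ∈ B, ∃ x ∈ Q, x α = b) :
    Nat.card Q = Nat.card B := by
  apply Nat.card_congr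
  refine Equiv.ofBijective (fun x => ⟨x.1 α, hmem x.1 x.2⟩) ⟨?_, ?_⟩
  · rintro ⟨x, hx⟩ ⟨y, hy⟩ hxy
    simp only [Subtype.mk.injEq] at hxy ⊢
    exact hfree x (hQP hx) y (hQP hy) hxy
  · rintro ⟨b, hb⟩
    obtain ⟨x, hx, hxb⟩ := hsurj b hb
    exact ⟨⟨x, hx⟩, Subtype.ext hxb⟩

lemma stmt6_core {Ω : Type*} [Finite Ω] (H P : Subgroup (Equiv.Perm Ω)) (α : Ω)
    (p k r : ℕ) (hp : p.Prime)
    (hPH : NormalIn P H) (hPtrans : TransOn P Set.univ)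
    (hPfree : ∀ x : Ω, stabOf P x = ⊥) (hPcard : Nat.card ↥P = p ^ k)
    (hr : r.Prime) (hrdvd : r ∣ p ^ k - 1)
    (hppd : ∀ i : ℕ, 0 < i → i < k → ¬ r ∣ p ^ i - 1)
    (hrstab : r ∣ Nat.card ↥(stabOf H α))
    (B : Set Ω) (hB : IsBlockOn H Set.univ B) (hαB : α ∈ B) :
    B.Subsingleton ∨ B = Set.univ := by
  classical
  haveI := Fact.mk hr
  -- regularity: evaluation is injective on P
  have hreg : ∀ β : Ω, ∀ x ∈ P, ∀ y ∈ P, x β = y β → x = y := by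
    intro β x hx y hy hxy
    have hmem : y⁻¹ * x ∈ stabOf P β := by
      refine Subgroup.mem_inf.mpr ⟨mul_mem (inv_mem hy) hx, ?_⟩
      rw [MulAction.mem_stabilizer_iff]
      show (y⁻¹ * x) β = β
      simp [Equiv.Perm.mul_apply, hxy]
    rw [hPfree β] at hmem
    have := Subgroup.mem_bot.mp hmem
    exact (inv_mul_eq_one.mp this).symm ▸ rfl
  -- Cauchy: an element of order r in the stabilizer
  haveI : Fintype (stabOf H α) := Fintype.ofFinite _
  obtain ⟨g₀, hg₀⟩ := exists_prime_orderOf_dvd_card (G := ↥(stabOf H α)) r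
    (by rwa [← Nat.card_eq_fintype_card])
  set g : Equiv.Perm Ω := (g₀ : Equiv.Perm Ω) with hgdef
  have hgord : orderOf g = r := by rw [← hg₀]; exact Subgroup.orderOf_coe g₀
  obtain ⟨hgH, hgst⟩ := Subgroup.mem_inf.mp g₀.2
  have hgα : g α = α := by
    have h0 := hgst
    rw [MulAction.mem_stabilizer_iff] at h0
    simpa [Equiv.Perm.smul_def] using h0
  have hginvα : g⁻¹ α = α := by conv_lhs => rw [← hgα]; simp
  -- B is g-invariant
  have hgBim : ⇑g '' B = B := by
    rcases hB.2 g hgH with h | h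
    · exact h
    · exact absurd h (Set.not_disjoint_iff.mpr ⟨α, ⟨α, hαB, hgα⟩, hαB⟩)
  have hgB : ∀ x, x ∈ B ↔ g x ∈ B := by
    intro x
    constructor
    · intro hx; rw [← hgBim]; exact ⟨x, hx, rfl⟩
    · intro hx
      rw [← hgBim] at hx
      obtain ⟨y, hy, hyx⟩ := hx
      rwa [← g.injective hyx]
  -- |Ω| = p ^ k
  have hcardΩ : Nat.card Ω = p ^ k := by
    have h1 : Nat.card P = Nat.card (Set.univ : Set Ω) :=
      card_eval_eq P P α (hreg α) le_rfl Set.univ (fun _ _ => trivial)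
        (fun b _ => hPtrans α trivial b trivial)
    rw [hPcard] at h1
    rw [← Nat.card_congr (Equiv.Set.univ Ω), ← h1]
  -- the fixed-point set of g
  set F : Set Ω := {x | g x = x} with hFdef
  set C : Subgroup (Equiv.Perm Ω) := P ⊓ Subgroup.centralizer {g} with hCdef
  have hCF : Nat.card C = Nat.card F := by
    refine card_eval_eq P C α (hreg α) inf_le_left F ?_ ?_
    · intro x hx
      obtain ⟨hxP, hxc⟩ := Subgroup.mem_inf.mp hx
      have hcomm : x * g = g * x := Subgroup.mem_centralizer_singleton_iff.mp hxc
      show g (x α) = x α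
      calc g (x α) = (g * x) α := rfl
        _ = (x * g) α := by rw [← hcomm]
        _ = x α := by simp [Equiv.Perm.mul_apply, hgα]
    · intro b hb
      obtain ⟨x, hxP, hxb⟩ := hPtrans α trivial b trivial
      have hcx : g * x * g⁻¹ ∈ P := hPH.2 g hgH x hxP
      have heval : (g * x * g⁻¹) α = x α := by
        have hbfix : g b = b := hb
        simp only [Equiv.Perm.mul_apply, hginvα, hxb, hbfix]
      have hfixx : g * x * g⁻¹ = x := hreg α _ hcx x hxP heval
      have hcomm : g * x = x * g := by
        have := hfixx
        rwa [mul_inv_eq_iff_eq_mul] at this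
      exact ⟨x, Subgroup.mem_inf.mpr ⟨hxP,
        Subgroup.mem_centralizer_singleton_iff.mpr hcomm.symm⟩, hxb⟩
  have hCd : Nat.card C ∣ p ^ k := hPcard ▸ Subgroup.card_dvd_of_le inf_le_left
  obtain ⟨m, hmk, hm⟩ := (Nat.dvd_prime_pow hp).mp hCd
  have hFm : Nat.card F = p ^ m := by rw [← hCF, hm]
  -- arithmetic dichotomy
  have hmod1 : p ^ k ≡ 1 [MOD r] :=
    ((Nat.modEq_iff_dvd' (Nat.one_le_pow _ _ hp.pos)).mpr hrdvd).symm
  have dich : ∀ j, j ≤ k → p ^ j ≡ 1 [MOD r] → j = 0 ∨ j = k := by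
    intro j hjk hj
    by_contra hcon
    push_neg at hcon
    exact hppd j (Nat.pos_of_ne_zero hcon.1) (lt_of_le_of_ne hjk hcon.2)
      ((Nat.modEq_iff_dvd' (Nat.one_le_pow _ _ hp.pos)).mp hj.symm)
  -- fixed points on univ
  have hUfix := fix_modEq g hr hgord Set.univ (by simp)
  have hfixF : Nat.card {x : Ω // x ∈ Set.univ ∧ g x = x} = Nat.card F := by
    apply Nat.card_congr
    exact Equiv.subtypeEquivRight (fun x => by simp [hFdef, Set.mem_setOf_eq])
  have hcard_univ : Nat.card (Set.univ : Set Ω) = p ^ k := by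
    rw [Nat.card_congr (Equiv.Set.univ Ω), hcardΩ]
  have hpm : p ^ m ≡ 1 [MOD r] := by
    have h2 := hUfix
    rw [hfixF, hFm, hcard_univ] at h2
    exact h2.symm.trans hmod1
  rcases dich m hmk hpm with hm0 | hmk2
  swap
  · -- m = k is impossible: g would be the identity
    exfalso
    have hFuniv : F = Set.univ := by
      apply Set.eq_of_subset_of_ncard_le (Set.subset_univ F)
      rw [Set.ncard_univ, hcardΩ, ← Nat.card_coe_set_eq, hFm, hmk2]
    have hg1 : g = 1 := by
      ext x
      exact (hFuniv ▸ Set.mem_univ x : x ∈ F)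
    rw [hg1, orderOf_one] at hgord
    exact hr.one_lt.ne' hgord.symm
  -- so F = {α}
  have hF1 : F.ncard = 1 := by
    rw [← Nat.card_coe_set_eq, hFm, hm0, pow_zero]
  obtain ⟨a, ha⟩ := Set.ncard_eq_one.mp hF1
  have hFα : F = {α} := by
    have hαF : α ∈ F := hgα
    rw [ha] at hαF ⊢
    rw [Set.mem_singleton_iff.mp hαF]
  -- the subgroup Q corresponding to the block B
  let Q : Subgroup (Equiv.Perm Ω) :=
  { carrier := {x | x ∈ P ∧ ⇑x '' B = B}
    one_mem' := ⟨one_mem P, by simp⟩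
    mul_mem' := by
      rintro a b ⟨haP, haB⟩ ⟨hbP, hbB⟩
      refine ⟨mul_mem haP hbP, ?_⟩
      rw [Equiv.Perm.coe_mul, Set.image_comp, hbB, haB]
    inv_mem' := by
      rintro a ⟨haP, haB⟩
      refine ⟨inv_mem haP, ?_⟩
      calc ⇑a⁻¹ '' B = ⇑a⁻¹ '' (⇑a '' B) := by rw [haB]
        _ = B := by rw [Set.image_image]; simp }
  have hQmem : ∀ x : Equiv.Perm Ω, x ∈ Q ↔ x ∈ P ∧ ⇑x '' B = B := fun x => Iff.rfl
  have hQP : Q ≤ P := fun x hx => ((hQmem x).mp hx).1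
  have hblock : ∀ x ∈ P, (x α ∈ B ↔ ⇑x '' B = B) := by
    intro x hxP
    constructor
    · intro hxα
      rcases hB.2 x (hPH.1 hxP) with h | h
      · exact h
      · exact absurd h (Set.not_disjoint_iff.mpr ⟨x α, ⟨α, hαB, rfl⟩, hxα⟩)
    · intro h; rw [← h]; exact ⟨α, hαB, rfl⟩
  have hQB : Nat.card Q = Nat.card B := by
    refine card_eval_eq P Q α (hreg α) hQP B ?_ ?_
    · intro x hx
      exact (hblock x ((hQmem x).mp hx).1).mpr ((hQmem x).mp hx).2
    · intro b hb
      obtain ⟨x, hxP, hxb⟩ := hPtrans α trivial b trivial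
      exact ⟨x, (hQmem x).mpr ⟨hxP, (hblock x hxP).mp (hxb ▸ hb)⟩, hxb⟩
  have hQd : Nat.card Q ∣ p ^ k := hPcard ▸ Subgroup.card_dvd_of_le hQP
  obtain ⟨i, hik, hi⟩ := (Nat.dvd_prime_pow hp).mp hQd
  -- fixed points in B
  have hBfix := fix_modEq g hr hgord B hgB
  have hfixB : Nat.card {x : Ω // x ∈ B ∧ g x = x} = 1 := by
    have he : ∀ x : Ω, (x ∈ B ∧ g x = x) ↔ x ∈ ({α} : Set Ω) := by
      intro x
      simp only [Set.mem_singleton_iff]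
      constructor
      · rintro ⟨-, hgx⟩
        have hxF : x ∈ F := hgx
        rw [hFα] at hxF
        exact hxF
      · rintro rfl
        exact ⟨hαB, hgα⟩
    rw [Nat.card_congr (Equiv.subtypeEquivRight he), Nat.card_coe_set_eq,
      Set.ncard_singleton]
  have hpi : p ^ i ≡ 1 [MOD r] := by
    have h3 := hBfix
    rw [hfixB, ← hQB, hi] at h3
    exact h3
  rcases dich i hik hpi with hi0 | hik2
  · -- |B| = 1
    left
    have : B.ncard = 1 := by
      rw [← Nat.card_coe_set_eq, ← hQB, hi, hi0, pow_zero]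
    obtain ⟨b, hb⟩ := Set.ncard_eq_one.mp this
    rw [hb]
    exact Set.subsingleton_singleton
  · -- |B| = |Ω|
    right
    apply Set.eq_of_subset_of_ncard_le (Set.subset_univ B)
    rw [Set.ncard_univ, hcardΩ, ← Nat.card_coe_set_eq, ← hQB, hi, hik2]

/-- **Lemma 3.1 (tech-4).** Let `H` be a permutation group on a finite set `Ω` and `α ∈ Ω`.
Suppose `H` has a regular normal subgroup `P ≅ Z_p^k` with `k ≥ 2` and `p` a prime.
If `p^k − 1` has a primitive prime divisor `r` and `r` divides `|H_α|`, then `H` is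
primitive on `Ω`. -/
theorem stmt_6 {Ω : Type*} [Finite Ω] (H P : Subgroup (Equiv.Perm Ω)) (α : Ω)
    (p k r : ℕ) (hp : p.Prime) (hk : 2 ≤ k)
    (hPH : NormalIn P H)
    (hPtrans : TransOn P Set.univ) (hPfree : ∀ x : Ω, stabOf P x = ⊥)
    (hPcard : Nat.card ↥P = p ^ k)
    (hPelem : ∀ g ∈ P, g ^ p = 1)
    (hPab : ∀ g ∈ P, ∀ h ∈ P, g * h = h * g)
    (hr : r.Prime) (hrdvd : r ∣ p ^ k - 1)
    (hppd : ∀ i : ℕ, 0 < i → i < k → ¬ r ∣ p ^ i - 1)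
    (hrstab : r ∣ Nat.card ↥(stabOf H α)) :
    PrimOn H Set.univ := by
  constructor
  · intro x hx y hy
    obtain ⟨g, hg, h⟩ := hPtrans x hx y hy
    exact ⟨g, hPH.1 hg, h⟩
  · intro B hB
    rcases Set.eq_empty_or_nonempty B with rfl | ⟨β, hβ⟩
    · exact Or.inl Set.subsingleton_empty
    obtain ⟨h, hhP, hhβ⟩ := hPtrans β trivial α trivial
    have hhH : h ∈ H := hPH.1 hhP
    have hB' : IsBlockOn H Set.univ (⇑h '' B) := by
      refine ⟨Set.subset_univ _, ?_⟩
      intro g hgH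
      have hcH : h⁻¹ * g * h ∈ H := mul_mem (mul_mem (inv_mem hhH) hgH) hhH
      rcases hB.2 _ hcH with heq | hdisj
      · left
        have : ⇑g '' (⇑h '' B) = ⇑h '' (⇑(h⁻¹ * g * h) '' B) := by
          rw [Equiv.Perm.coe_mul, Equiv.Perm.coe_mul, Set.image_comp, Set.image_comp,
            Set.image_image]
          simp [Set.image_image]
        rw [this, heq]
      · right
        have himg : ⇑g '' (⇑h '' B) = ⇑h '' (⇑(h⁻¹ * g * h) '' B) := by
          rw [Equiv.Perm.coe_mul, Equiv.Perm.coe_mul, Set.image_comp, Set.image_comp,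
            Set.image_image]
          simp [Set.image_image]
        rw [himg]
        exact (Set.disjoint_image_iff h.injective).mpr hdisj
    rcases stmt6_core H P α p k r hp hPH hPtrans hPfree hPcard hr hrdvd hppd hrstab
        (⇑h '' B) hB' ⟨β, hβ, hhβ⟩ with hs | he
    · left
      intro x hx y hy
      exact h.injective (hs ⟨x, hx, rfl⟩ ⟨y, hy, rfl⟩)
    · right
      apply Set.eq_univ_of_forall
      intro x
      have : h x ∈ ⇑h '' B := he ▸ Set.mem_univ (h x)
      obtain ⟨y, hy, hyx⟩ := this
      rwa [← h.injective hyx]
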